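/- Let k ≥ 2 be an integer and let F : ℤ → ℤ be multiplication by k. A subset S ⊆ ℤ is F-automatic (i.e., there exist an integer r > 0 and an F^r-spanning set Σ for ℤ such that {w ∈ Σ* : [w]_{F^r} ∈ S} is a regular language) if and only if S is k-automatic in the classical sense, i.e., the collection of sets {x ∈ ℤ : c + k^m x ∈ S}, as m ranges over ℕ and c over {0, 1, …, k^m − 1}, contains only finitely many distinct subsets of ℤ. -/

import Mathlib

open Pointwise

/-- `[w]_F`: the base-`F` evaluation of a word `w = x₀x₁⋯x_m`,
namely `x₀ + F x₁ + ⋯ + F^m x_m`, with `[∅]_F = 0`. -/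
def wordVal {Γ : Type*} [AddCommGroup Γ] (F : AddMonoid.End Γ) : List Γ → Γ
  | [] => 0
  | x :: xs => x + F (wordVal F xs)

/-- `Sig` is an `F`-spanning set for `Γ`. -/
def IsSpanningSet {Γ : Type*} [AddCommGroup Γ] (F : AddMonoid.End Γ) (Sig : Set Γ) : Prop :=
  Sig.Finite ∧
  (0 : Γ) ∈ Sig ∧ (∀ x ∈ Sig, -x ∈ Sig) ∧
  (∀ x : Γ, F x ∈ Sig → x ∈ Sig) ∧
  (∀ x : Γ, ∃ w : List Γ, (∀ y ∈ w, y ∈ Sig) ∧ wordVal F w = x) ∧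
  (∀ x₁ ∈ Sig, ∀ x₂ ∈ Sig, ∀ x₃ ∈ Sig, ∀ x₄ ∈ Sig, ∀ x₅ ∈ Sig,
    ∃ t ∈ Sig, ∃ t' ∈ Sig, x₁ + x₂ + x₃ + x₄ + x₅ = t + F t') ∧
  (∀ x₁ ∈ Sig, ∀ x₂ ∈ Sig, ∀ x₃ ∈ Sig,
    (∃ y : Γ, x₁ + x₂ + x₃ = F y) → ∃ t ∈ Sig, x₁ + x₂ + x₃ = F t)

/-- `S` is `(Σ,F)`-automatic: the language of words over `Σ` whose base-`F` value lies
in `S` is a regular language. -/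
def IsSFAutomatic {Γ : Type*} [AddCommGroup Γ] (F : AddMonoid.End Γ) (Sig : Set Γ)
    (S : Set Γ) : Prop :=
  Language.IsRegular {w : List ↥Sig | wordVal F (w.map Subtype.val) ∈ S}

lemma wordVal_nil {Γ : Type*} [AddCommGroup Γ] (F : AddMonoid.End Γ) :
    wordVal F [] = 0 := rfl

lemma wordVal_cons {Γ : Type*} [AddCommGroup Γ] (F : AddMonoid.End Γ) (x : Γ) (xs : List Γ) :
    wordVal F (x :: xs) = x + F (wordVal F xs) := rfl

lemma end_pow_apply (k : ℤ) (F : AddMonoid.End ℤ) (hF : ∀ x : ℤ, F x = k * x)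
    (r : ℕ) (x : ℤ) : (F ^ r) x = k ^ r * x := by
  induction r generalizing x with
  | zero => simp [AddMonoid.End.one_apply]
  | succ n ih =>
    have h : (F ^ (n+1)) x = (F ^ n) (F x) := rfl
    rw [h, hF, ih, pow_succ]
    ring

lemma wordVal_append {Γ : Type*} [AddCommGroup Γ] (F : AddMonoid.End Γ) (w u : List Γ) :
    wordVal F (w ++ u) = wordVal F w + (F ^ w.length) (wordVal F u) := by
  induction w with
  | nil => simp [wordVal_nil, AddMonoid.End.one_apply]
  | cons x xs ih =>
    have h : ∀ y, (F ^ (xs.length + 1)) y = F ((F ^ xs.length) y) := fun y => by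
      rw [pow_succ']; rfl
    simp only [List.cons_append, wordVal_cons, ih, map_add, List.length_cons, h, add_assoc]

lemma rep_exists (K : ℤ) (hK : 2 ≤ K) (G : AddMonoid.End ℤ) (hG : ∀ x : ℤ, G x = K * x) :
    ∀ x : ℤ, ∃ w : List ℤ, (∀ y ∈ w, y ∈ Set.Icc (-K) K) ∧ wordVal G w = x := by
  have H : ∀ n : ℕ, ∀ x : ℤ, x.natAbs ≤ n →
      ∃ w : List ℤ, (∀ y ∈ w, y ∈ Set.Icc (-K) K) ∧ wordVal G w = x := by
    intro n
    induction n with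
    | zero =>
      intro x hx
      have : x = 0 := by omega
      exact ⟨[], by simp, by simp [this, wordVal_nil]⟩
    | succ n ih =>
      intro x hx
      by_cases h : |x| ≤ K
      · refine ⟨[x], ?_, ?_⟩
        · intro y hy
          simp at hy
          subst hy
          exact Set.mem_Icc.2 (abs_le.mp h)
        · simp [wordVal_cons, wordVal_nil, hG]
      · push_neg at h
        set d := x % K with hd
        set x' := x / K with hx'
        have hKpos : (0:ℤ) < K := by omega
        have hdr : 0 ≤ d ∧ d < K := ⟨Int.emod_nonneg x (by omega), Int.emod_lt_of_pos x hKpos⟩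
        have hxeq : x = d + K * x' := by
          rw [hd, hx']; rw [Int.emod_add_mul_ediv]
        have habs : K * |x'| ≤ |x| + (K - 1) := by
          have : K * x' = x - d := by omega
          have h2 : |K * x'| = K * |x'| := by
            rw [abs_mul, abs_of_pos hKpos]
          have h3 : |x - d| ≤ |x| + |d| := abs_sub _ _
          have h4 : |d| ≤ K - 1 := by rw [abs_of_nonneg hdr.1]; omega
          have h5 : |K * x'| = |x - d| := by rw [this]
          omega
        have hlt : |x'| < |x| := by
          nlinarith [abs_nonneg x', abs_nonneg x]
        have hnat : x'.natAbs < x.natAbs := by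
          have := Int.abs_eq_natAbs x'
          have := Int.abs_eq_natAbs x
          omega
        obtain ⟨w, hw, hval⟩ := ih x' (by omega)
        refine ⟨d :: w, ?_, ?_⟩
        · intro y hy
          rcases List.mem_cons.mp hy with h1 | h1
          · subst h1; exact Set.mem_Icc.2 ⟨by omega, by omega⟩
          · exact hw y h1
        · rw [wordVal_cons, hG, hval]; omega
  intro x
  exact H x.natAbs x le_rfl

/-- The family of generalized kernel sets with bounded shift. -/
def kerFam (k : ℤ) (S : Set ℤ) : Set (Set ℤ) :=
  {T | ∃ (m : ℕ) (c : ℤ), |c| ≤ 2 * k ^ m ∧ T = {x : ℤ | c + k ^ m * x ∈ S}}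

lemma S_mem_kerFam (k : ℤ) (hk : 2 ≤ k) (S : Set ℤ) : S ∈ kerFam k S := by
  refine ⟨0, 0, by norm_num, by ext x; simp⟩

def kerStep (k : ℤ) (hk : 2 ≤ k) (S : Set ℤ)
    (T : ↥(kerFam k S)) (d : ↥(Set.Icc (-(k^3)) (k^3))) : ↥(kerFam k S) := by
  refine ⟨{y : ℤ | (d : ℤ) + k ^ 3 * y ∈ (T : Set ℤ)}, ?_⟩
  obtain ⟨m, c, hc, hT⟩ := T.2
  have hkm : (0:ℤ) < k ^ m := by positivity
  have hk3 : (8:ℤ) ≤ k ^ 3 := by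
    have : (2:ℤ)^3 ≤ k^3 := pow_le_pow_left₀ (by norm_num) hk 3
    norm_num at this; omega
  refine ⟨m + 3, c + k ^ m * (d : ℤ), ?_, ?_⟩
  · have hd : |(d:ℤ)| ≤ k ^ 3 := abs_le.2 (Set.mem_Icc.1 d.2)
    have e0 : |k ^ m * (d:ℤ)| = k ^ m * |(d:ℤ)| := by rw [abs_mul, abs_of_pos hkm]
    have e1 : |c + k ^ m * (d:ℤ)| ≤ |c| + k ^ m * |(d:ℤ)| := by
      rw [← e0]; exact abs_add_le _ _
    have e2 : (2:ℤ) * k ^ (m+3) = 2 * (k ^ m * k ^ 3) := by rw [pow_add]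
    have e3 : k ^ m * |(d:ℤ)| ≤ k ^ m * k ^ 3 :=
      mul_le_mul_of_nonneg_left hd (le_of_lt hkm)
    nlinarith [abs_nonneg c]
  · have heq : ∀ y : ℤ, c + k ^ m * ((d:ℤ) + k ^ 3 * y) = c + k ^ m * (d:ℤ) + k ^ (m+3) * y := by
      intro y; rw [pow_add]; ring
    rw [hT]; ext y
    simp only [Set.mem_setOf_eq, heq]

def kerDFA (k : ℤ) (hk : 2 ≤ k) (S : Set ℤ) :
    DFA ↥(Set.Icc (-(k^3)) (k^3)) ↥(kerFam k S) where
  step := kerStep k hk S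
  start := ⟨S, S_mem_kerFam k hk S⟩
  accept := {T | (0:ℤ) ∈ (T : Set ℤ)}

lemma kerDFA_evalFrom (k : ℤ) (hk : 2 ≤ k) (S : Set ℤ)
    (F : AddMonoid.End ℤ) (hF : ∀ x : ℤ, F x = k * x) :
    ∀ (w : List ↥(Set.Icc (-(k^3)) (k^3))) (T : ↥(kerFam k S)),
      (((kerDFA k hk S).evalFrom T w : ↥(kerFam k S)) : Set ℤ) =
        {y : ℤ | wordVal (F ^ 3) (w.map Subtype.val) + (k ^ 3) ^ w.length * y ∈ (T : Set ℤ)} := by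
  have hG : ∀ x : ℤ, (F ^ 3) x = k ^ 3 * x := end_pow_apply k F hF 3
  intro w
  induction w with
  | nil =>
    intro T
    ext y
    simp [wordVal_nil, DFA.evalFrom]
  | cons d w ih =>
    intro T
    have h1 : (kerDFA k hk S).evalFrom T (d :: w) =
        (kerDFA k hk S).evalFrom (kerStep k hk S T d) w := rfl
    rw [h1, ih]
    have hco : ((kerStep k hk S T d : ↥(kerFam k S)) : Set ℤ) =
        {y : ℤ | (d : ℤ) + k ^ 3 * y ∈ (T : Set ℤ)} := rfl
    ext y
    simp only [Set.mem_setOf_eq, hco, List.map_cons, List.length_cons, wordVal_cons, hG]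
    have heq : (d:ℤ) + k ^ 3 * (wordVal (F ^ 3) (w.map Subtype.val) + (k ^ 3) ^ w.length * y) =
        (d:ℤ) + k ^ 3 * wordVal (F ^ 3) (w.map Subtype.val) + (k ^ 3) ^ (w.length + 1) * y := by
      ring
    simp only [← heq]

lemma kerFam_finite (k : ℤ) (hk : 2 ≤ k) (S : Set ℤ)
    (hker : {T : Set ℤ | ∃ (m : ℕ) (c : ℤ), 0 ≤ c ∧ c < k ^ m ∧
        T = {x : ℤ | c + k ^ m * x ∈ S}}.Finite) :
    (kerFam k S).Finite := by
  set Ker := {T : Set ℤ | ∃ (m : ℕ) (c : ℤ), 0 ≤ c ∧ c < k ^ m ∧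
        T = {x : ℤ | c + k ^ m * x ∈ S}} with hKer
  have hsub : kerFam k S ⊆ ⋃ e ∈ Set.Icc (-2:ℤ) 2,
      (fun T : Set ℤ => (fun x : ℤ => x + e) ⁻¹' T) '' Ker := by
    rintro T ⟨m, c, hc, rfl⟩
    have hkm : (0:ℤ) < k ^ m := by positivity
    set c' := c % k ^ m with hc'
    set e := c / k ^ m with he
    have h1 : 0 ≤ c' := Int.emod_nonneg c (by omega)
    have h2 : c' < k ^ m := Int.emod_lt_of_pos c hkm
    have hce : k ^ m * e + c' = c := Int.mul_ediv_add_emod c (k ^ m)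
    have habs := abs_le.mp hc
    have he1 : e ≤ 2 := by
      have h3 : c / k ^ m ≤ (2 * k ^ m) / k ^ m := Int.ediv_le_ediv hkm habs.2
      rwa [mul_comm, Int.mul_ediv_cancel_left _ (by omega)] at h3
    have he2 : -2 ≤ e := by
      have h3 : (-(2 * k ^ m)) / k ^ m ≤ c / k ^ m := Int.ediv_le_ediv hkm habs.1
      have h4 : (-(2 * k ^ m)) = (-2) * k ^ m := by ring
      rwa [h4, mul_comm, Int.mul_ediv_cancel_left _ (by omega)] at h3
    have hxx : ∀ x : ℤ, c + k ^ m * x = c' + k ^ m * (x + e) := by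
      intro x; rw [← hce]; ring
    refine Set.mem_biUnion (Set.mem_Icc.2 ⟨he2, he1⟩)
      ⟨{x | c' + k ^ m * x ∈ S}, ⟨m, c', h1, h2, rfl⟩, ?_⟩
    ext x
    simp only [Set.mem_preimage, Set.mem_setOf_eq, hxx x]
  exact Set.Finite.subset ((Set.finite_Icc _ _).biUnion (fun e _ => hker.image _)) hsub

lemma backward_dir (k : ℤ) (hk : 2 ≤ k) (F : AddMonoid.End ℤ) (hF : ∀ x : ℤ, F x = k * x)
    (S : Set ℤ)
    (hker : {T : Set ℤ | ∃ (m : ℕ) (c : ℤ), 0 ≤ c ∧ c < k ^ m ∧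
        T = {x : ℤ | c + k ^ m * x ∈ S}}.Finite) :
    ∃ r : ℕ, 0 < r ∧ ∃ Sig : Set ℤ, IsSpanningSet (F ^ r) Sig ∧ IsSFAutomatic (F ^ r) Sig S := by
  have hG : ∀ x : ℤ, (F ^ 3) x = k ^ 3 * x := end_pow_apply k F hF 3
  have hk3 : (8:ℤ) ≤ k ^ 3 := by
    have : (2:ℤ)^3 ≤ k^3 := pow_le_pow_left₀ (by norm_num) hk 3
    norm_num at this; omega
  have hKpos : (0:ℤ) < k ^ 3 := by omega
  refine ⟨3, by norm_num, Set.Icc (-(k^3)) (k^3), ?_, ?_⟩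
  · refine ⟨Set.finite_Icc _ _, ?_, ?_, ?_, ?_, ?_, ?_⟩
    · exact Set.mem_Icc.2 ⟨by omega, by omega⟩
    · intro x hx
      rw [Set.mem_Icc] at hx ⊢; omega
    · intro x hx
      rw [hG] at hx; rw [Set.mem_Icc] at hx ⊢
      constructor <;> nlinarith
    · exact rep_exists (k^3) (by omega) (F^3) hG
    · intro x₁ h1 x₂ h2 x₃ h3 x₄ h4 x₅ h5
      rw [Set.mem_Icc] at h1 h2 h3 h4 h5
      set s := x₁ + x₂ + x₃ + x₄ + x₅ with hs
      have hm1 : 0 ≤ s % k^3 := Int.emod_nonneg s (by omega)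
      have hm2 : s % k^3 < k^3 := Int.emod_lt_of_pos s hKpos
      refine ⟨s % k^3, Set.mem_Icc.2 ⟨by omega, by omega⟩, s / k^3, ?_, ?_⟩
      · have hs1 : (-5) * k^3 ≤ s := by omega
        have hs2 : s ≤ 5 * k^3 := by omega
        have hq1 : ((-5) * k^3) / k^3 ≤ s / k^3 := Int.ediv_le_ediv hKpos hs1
        have hq2 : s / k^3 ≤ (5 * k^3) / k^3 := Int.ediv_le_ediv hKpos hs2
        rw [mul_comm, Int.mul_ediv_cancel_left _ (by omega)] at hq1
        rw [mul_comm, Int.mul_ediv_cancel_left _ (by omega)] at hq2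
        exact Set.mem_Icc.2 ⟨by omega, by omega⟩
      · rw [hG]
        have := Int.emod_add_mul_ediv s (k^3)
        omega
    · rintro x₁ h1 x₂ h2 x₃ h3 ⟨y, hy⟩
      rw [Set.mem_Icc] at h1 h2 h3
      refine ⟨y, ?_, hy⟩
      rw [hG] at hy
      rw [Set.mem_Icc]
      constructor <;> nlinarith
  · refine ⟨↥(kerFam k S), (kerFam_finite k hk S hker).fintype, kerDFA k hk S, ?_⟩
    ext w
    have hkey := kerDFA_evalFrom k hk S F hF w ⟨S, S_mem_kerFam k hk S⟩
    have hacc : w ∈ (kerDFA k hk S).accepts ↔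
        (0:ℤ) ∈ (((kerDFA k hk S).evalFrom ⟨S, S_mem_kerFam k hk S⟩ w : ↥(kerFam k S)) : Set ℤ) :=
      Iff.rfl
    change _ ↔ wordVal (F ^ 3) (List.map Subtype.val w) ∈ S
    constructor
    · intro h
      have h0 := hacc.mp h
      rw [hkey] at h0
      simpa using h0
    · intro h
      apply hacc.mpr
      rw [hkey]
      simpa using h

set_option maxHeartbeats 1000000 in
lemma forward_dir (k : ℤ) (hk : 2 ≤ k) (F : AddMonoid.End ℤ) (hF : ∀ x : ℤ, F x = k * x)
    (S : Set ℤ) (r : ℕ) (hr : 0 < r) (Sig : Set ℤ)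
    (hspan : IsSpanningSet (F ^ r) Sig) (hreg : IsSFAutomatic (F ^ r) Sig S) :
    {T : Set ℤ | ∃ (m : ℕ) (c : ℤ), 0 ≤ c ∧ c < k ^ m ∧
        T = {x : ℤ | c + k ^ m * x ∈ S}}.Finite := by
  obtain ⟨hfin, h0, hneg, hdiv, hrep, h5, h3⟩ := hspan
  obtain ⟨σT, hfintype, M, hM⟩ := hreg
  haveI := hfintype
  set K : ℤ := k ^ r with hKdef
  have hG : ∀ x : ℤ, (F ^ r) x = K * x := end_pow_apply k F hF r
  have hGn : ∀ (n : ℕ) (x : ℤ), ((F ^ r) ^ n) x = K ^ n * x :=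
    fun n x => end_pow_apply K (F ^ r) hG n x
  have hK : 2 ≤ K := by
    calc (2:ℤ) ≤ k := hk
    _ = k ^ 1 := (pow_one k).symm
    _ ≤ k ^ r := pow_le_pow_right₀ (by omega) hr
  obtain ⟨B, hB0, hB⟩ : ∃ B : ℤ, 0 ≤ B ∧ ∀ s ∈ Sig, |s| ≤ B := by
    obtain ⟨B, hB⟩ := (hfin.image (fun x => |x|)).bddAbove
    exact ⟨max B 0, le_max_right _ _,
      fun s hs => le_trans (hB (Set.mem_image_of_mem _ hs)) (le_max_left _ _)⟩
  have hres : ∀ c : ℤ, ∃ t ∈ Sig, ∃ c' : ℤ, c = t + K * c' := by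
    intro c
    obtain ⟨w, hw, hval⟩ := hrep c
    cases w with
    | nil =>
      refine ⟨0, h0, 0, ?_⟩
      rw [wordVal_nil] at hval
      omega
    | cons x xs =>
      refine ⟨x, hw x (by simp), wordVal (F ^ r) xs, ?_⟩
      rw [← hval, wordVal_cons, hG]
  have greedy : ∀ m : ℕ, ∀ c : ℤ, ∃ (w : List ℤ) (y : ℤ),
      (∀ s ∈ w, s ∈ Sig) ∧ w.length = m ∧ c = wordVal (F ^ r) w + K ^ m * y ∧
      (K - 1) * |y| * K ^ m ≤ (K - 1) * |c| + B * K * (K ^ m - 1) := by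
    intro m
    induction m with
    | zero =>
      intro c
      exact ⟨[], c, by simp, rfl, by simp [wordVal_nil], by simp⟩
    | succ m ih =>
      intro c
      obtain ⟨t, ht, c₁, hc⟩ := hres c
      obtain ⟨w, y, hw1, hw2, hw3, hw4⟩ := ih c₁
      refine ⟨t :: w, y, ?_, by simp [hw2], ?_, ?_⟩
      · intro s hs
        rcases List.mem_cons.mp hs with h | h
        · subst h; exact ht
        · exact hw1 s h
      · rw [wordVal_cons, hG, hc, hw3, pow_succ]; ring
      · have hKm : (0:ℤ) < K ^ m := by positivity
        have habs : K * |c₁| ≤ |c| + B := by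
          have h1 : |K * c₁| = K * |c₁| := by rw [abs_mul, abs_of_pos (by omega : (0:ℤ) < K)]
          have h2 : K * c₁ = c - t := by omega
          rw [h2] at h1
          have h3 : |c - t| ≤ |c| + |t| := abs_sub _ _
          have h4 : |t| ≤ B := hB t ht
          omega
        have e1 : (K:ℤ) ^ (m+1) = K ^ m * K := pow_succ K m
        have s1 : ((K-1) * |y| * K ^ m) * K ≤ ((K-1) * |c₁| + B * K * (K ^ m - 1)) * K :=
          mul_le_mul_of_nonneg_right hw4 (by omega)
        have s2 : (K-1) * (K * |c₁|) ≤ (K-1) * (|c| + B) :=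
          mul_le_mul_of_nonneg_left habs (by omega)
        have s3 : 0 ≤ B * (K^2 - 2*K + 1) := mul_nonneg hB0 (by nlinarith [sq_nonneg (K-1)])
        rw [e1]
        nlinarith [s1, s2, s3]
  have attach : ∀ (w : List ℤ), (∀ s ∈ w, s ∈ Sig) → ∃ u : List ↥Sig,
      u.map Subtype.val = w := by
    intro w
    induction w with
    | nil => intro _; exact ⟨[], rfl⟩
    | cons x xs ih =>
      intro h
      obtain ⟨u, hu⟩ := ih (fun s hs => h s (List.mem_cons_of_mem _ hs))
      exact ⟨⟨x, h x List.mem_cons_self⟩ :: u, by simp [hu]⟩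
  set V : σT → Set ℤ := fun p =>
    {x | ∃ u : List ↥Sig, wordVal (F ^ r) (u.map Subtype.val) = x ∧
      M.evalFrom p u ∈ M.accept} with hV
  have keyV : ∀ (w : List ↥Sig) (x : ℤ),
      x ∈ V (M.eval w) ↔ wordVal (F ^ r) (w.map Subtype.val) + K ^ w.length * x ∈ S := by
    intro w x
    constructor
    · rintro ⟨u, hu, hacc⟩
      have hin : w ++ u ∈ M.accepts := by
        rw [DFA.mem_accepts]
        show M.evalFrom M.start (w ++ u) ∈ M.accept
        rw [M.evalFrom_of_append]
        exact hacc
      rw [hM] at hin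
      have h2 : wordVal (F ^ r) ((w ++ u).map Subtype.val) ∈ S := hin
      rw [List.map_append, wordVal_append, List.length_map, hGn, hu] at h2
      exact h2
    · intro hS
      obtain ⟨w₀, hw₀, hval⟩ := hrep x
      obtain ⟨u, hu⟩ := attach w₀ hw₀
      refine ⟨u, by rw [hu, hval], ?_⟩
      have hin : w ++ u ∈ M.accepts := by
        rw [hM]
        show wordVal (F ^ r) ((w ++ u).map Subtype.val) ∈ S
        rw [List.map_append, wordVal_append, List.length_map, hGn, hu, hval]
        exact hS
      rw [DFA.mem_accepts] at hin
      show M.evalFrom (M.evalFrom M.start w) u ∈ M.accept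
      rw [← M.evalFrom_of_append]
      exact hin
  set D : ℤ := K + 2 * B with hD
  set Φ : σT × ℤ × ℕ → Set ℤ := fun p => (fun x : ℤ => p.2.1 + k ^ p.2.2 * x) ⁻¹' V p.1 with hΦ
  have hidx : ((Set.univ : Set σT) ×ˢ (Set.Icc (-D) D ×ˢ Set.Iio r)).Finite :=
    Set.finite_univ.prod ((Set.finite_Icc _ _).prod (Set.finite_Iio _))
  apply Set.Finite.subset (hidx.image Φ)
  rintro T ⟨m, c, hc0, hcm, rfl⟩
  set q := m / r with hq
  set s := m % r with hs
  have hsr : s < r := Nat.mod_lt _ hr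
  have hmqs : m = r * q + s := (Nat.div_add_mod m r).symm
  have hpow : k ^ m = K ^ q * k ^ s := by
    rw [hKdef, ← pow_mul, ← pow_add, ← hmqs]
  have hksK : k ^ s ≤ K := by
    rw [hKdef]; exact pow_le_pow_right₀ (by omega) (le_of_lt hsr)
  have hkspos : (0:ℤ) < k ^ s := by positivity
  have hKq : (0:ℤ) < K ^ q := by positivity
  have hcK : c ≤ K ^ (q+1) := by
    have h1 : c < K ^ q * k ^ s := by rw [← hpow]; exact hcm
    have h2 : K ^ q * k ^ s ≤ K ^ q * K := mul_le_mul_of_nonneg_left hksK (le_of_lt hKq)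
    rw [pow_succ]
    omega
  obtain ⟨w, y, hw1, hw2, hw3, hw4⟩ := greedy q c
  have hyD : |y| ≤ D := by
    have habsc : |c| = c := abs_of_nonneg hc0
    have h5 : ((K-1) * |y|) * K ^ q ≤ ((K-1) * K + B * K) * K ^ q := by
      have hle : (K-1) * |c| ≤ (K-1) * (K ^ q * K) := by
        rw [habsc]
        have := pow_succ K q
        nlinarith [hcK]
      nlinarith [hw4, hle, hB0, hKq, hK]
    have h6 : (K-1) * |y| ≤ (K-1) * K + B * K := le_of_mul_le_mul_right h5 hKq
    have h7 : (K-1) * |y| ≤ (K-1) * (K + 2*B) := by nlinarith [h6, hB0, hK]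
    have h8 : |y| ≤ K + 2*B := le_of_mul_le_mul_left h7 (by omega)
    rw [hD]
    exact h8
  obtain ⟨u, hu⟩ := attach w hw1
  refine ⟨(M.eval u, y, s), ⟨Set.mem_univ _, Set.mem_Icc.2 (abs_le.mp hyD), hsr⟩, ?_⟩
  have hlen : u.length = q := by
    have := congrArg List.length hu
    rw [List.length_map] at this
    rw [this, hw2]
  ext x
  simp only [hΦ, Set.mem_preimage]
  rw [keyV u (y + k ^ s * x), hu, hlen]
  have heq : wordVal (F ^ r) w + K ^ q * (y + k ^ s * x) = c + k ^ m * x := by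
    rw [hw3, hpow]; ring
  rw [heq]
  simp [Set.mem_setOf_eq]

/-- For `F : ℤ → ℤ` multiplication by `k ≥ 2`, a set `S ⊆ ℤ` is
`F`-automatic (i.e. `(Σ,F^r)`-automatic for some `r > 0` and `F^r`-spanning set `Σ`)
if and only if `S` is `k`-automatic in the classical sense: the collection of kernel
sets `{x : c + k^m x ∈ S}`, for `m ∈ ℕ` and `0 ≤ c < k^m`, is finite. -/
theorem fAutomatic_iff_classical_k_automatic (k : ℤ) (hk : 2 ≤ k)
    (F : AddMonoid.End ℤ) (hF : ∀ x : ℤ, F x = k * x) (S : Set ℤ) :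
    (∃ r : ℕ, 0 < r ∧ ∃ Sig : Set ℤ, IsSpanningSet (F ^ r) Sig ∧
        IsSFAutomatic (F ^ r) Sig S) ↔
      {T : Set ℤ | ∃ (m : ℕ) (c : ℤ), 0 ≤ c ∧ c < k ^ m ∧
        T = {x : ℤ | c + k ^ m * x ∈ S}}.Finite := by
  constructor
  · rintro ⟨r, hr, Sig, hspan, hreg⟩
    exact forward_dir k hk F hF S r hr Sig hspan hreg
  · intro hker
    exact backward_dir k hk F hF S hker
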